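/- (Cancellation identity F_{ℓ,1}) Let L be a Lie algebra with elements X_1,...,X_m. For any word v of length ℓ ≥ 2, any word w (possibly empty), and any integer b ≥ 1, Σ_{σ ∈ S_ℓ} π_ℓ(σ) Σ_{i=1}^{ℓ} X_{σ_i(v)^b w} = 0, where σ_i(v)^b denotes the letter σ_i(v) repeated b times, X_{uw} is the left-nested bracket of the concatenated word, and when w is empty X_{σ_i(v)^b} is interpreted with the convention that a nested bracket of a single repeated letter of length ≥ 2 vanishes. -/
import Mathlib


/-- The coefficient `π_ℓ` evaluated on the word `σ(1)σ(2)⋯σ(ℓ)` (letters `0,…,ℓ-1`),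
defined inductively: value `1` on a single letter; if the word starts with the
smallest letter `0`, recurse on the remaining (shifted) word; if it ends with `0`,
recurse with a sign change; otherwise the value is `0`. -/
def piW : List ℕ → ℤ
  | [] => 0
  | [_] => 1
  | a :: b :: l =>
    if a = 0 then piW ((b :: l).map (· - 1))
    else if (a :: b :: l).getLast? = some 0 then
      - piW ((a :: b :: l).dropLast.map (· - 1))
    else 0
termination_by w => w.length
decreasing_by all_goals (simp; try omega)

/-- `π_ℓ(σ)` for a permutation `σ` of `ℓ` letters. -/
def piPerm {ℓ : ℕ} (σ : Equiv.Perm (Fin ℓ)) : ℤ :=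
  piW ((List.finRange ℓ).map (fun j => (σ j : ℕ)))

/-- Left-nested Lie bracket of a list: `[x₁,[x₂,…,[x_{k-1},x_k]…]]`. -/
def nestedBracket {L : Type*} [LieRing L] : List L → L
  | [] => 0
  | [x] => x
  | x :: y :: l => ⁅x, nestedBracket (y :: l)⁆

lemma piW_cons_zero (b : ℕ) (l : List ℕ) :
    piW (0 :: b :: l) = piW ((b :: l).map (· - 1)) := by
  simp [piW]

lemma piW_concat_zero (a : ℕ) (t : List ℕ) (ha : a ≠ 0) :
    piW ((a :: t) ++ [0]) = - piW ((a :: t).map (· - 1)) := by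
  cases t with
  | nil => simp [piW, ha]
  | cons c t' =>
    rw [List.cons_append, List.cons_append, piW]
    have h1 : (a :: c :: (t' ++ [0])).getLast? = some 0 := by
      rw [show a :: c :: (t' ++ [0]) = (a :: c :: t') ++ [0] by simp,
        List.getLast?_concat]
    have h2 : (a :: c :: (t' ++ [0])).dropLast = a :: c :: t' := by
      rw [show a :: c :: (t' ++ [0]) = (a :: c :: t') ++ [0] by simp,
        List.dropLast_concat]
    simp [ha, h1, h2]

lemma piW_eq_zero (a b : ℕ) (l : List ℕ) (ha : a ≠ 0)
    (hl : (a :: b :: l).getLast? ≠ some 0) : piW (a :: b :: l) = 0 := by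
  rw [piW, if_neg ha, if_neg hl]

lemma word_succ {n : ℕ} (σ : Equiv.Perm (Fin (n + 2))) :
    (List.finRange (n + 2)).map (fun j => (σ j : ℕ)) =
      (σ 0 : ℕ) :: (List.finRange (n + 1)).map (fun j => (σ j.succ : ℕ)) := by
  rw [List.finRange_succ]; simp [List.map_map, Function.comp]

lemma word_last {n : ℕ} (σ : Equiv.Perm (Fin (n + 2))) :
    (List.finRange (n + 2)).map (fun j => (σ j : ℕ)) =
      (List.finRange (n + 1)).map (fun j => (σ j.castSucc : ℕ)) ++ [(σ (Fin.last (n + 1)) : ℕ)] := by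
  rw [List.finRange_succ_last]; simp [List.map_map, Function.comp]

lemma piPerm_rot {n : ℕ} (σ : Equiv.Perm (Fin (n + 2))) (h : σ 0 = 0) :
    piPerm (σ * finRotate (n + 2)) = - piPerm σ := by
  unfold piPerm
  have hcomp : ∀ j : Fin (n + 1), ((σ * finRotate (n + 2)) j.castSucc : ℕ) = (σ j.succ : ℕ) := by
    intro j
    simp [Equiv.Perm.mul_apply, Fin.coeSucc_eq_succ]
  have hlast : ((σ * finRotate (n + 2)) (Fin.last (n + 1)) : ℕ) = 0 := by
    simp [Equiv.Perm.mul_apply, Fin.last_add_one, h]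
  rw [word_last (σ * finRotate (n + 2)), word_succ σ]
  simp only [hcomp, hlast, h, Fin.val_zero]
  rw [List.finRange_succ]
  simp only [List.map_cons, List.map_map]
  generalize List.map ((fun j => ((σ j.succ : ℕ))) ∘ Fin.succ) (List.finRange n) = t'
  have h1 : (σ (Fin.succ 0) : ℕ) ≠ 0 := by
    intro hc
    have h2 : σ (Fin.succ 0) = σ 0 := Fin.ext (by rw [hc, h]; rfl)
    have := σ.injective h2
    simp [Fin.ext_iff] at this
  rw [piW_concat_zero _ _ h1, piW_cons_zero]

lemma sum_piPerm_eq_zero (n : ℕ) :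
    ∑ σ : Equiv.Perm (Fin (n + 2)), piPerm σ = 0 := by
  classical
  apply Finset.sum_ninvolution
    (g := fun σ => if σ 0 = 0 then σ * finRotate (n + 2)
      else if σ (Fin.last (n + 1)) = 0 then σ * (finRotate (n + 2))⁻¹ else σ)
  · -- f a + f (g a) = 0
    intro σ
    by_cases h0 : σ 0 = 0
    · simp only [h0, if_pos rfl, if_true]
      rw [piPerm_rot σ h0]; ring
    · rw [if_neg h0]
      by_cases hl : σ (Fin.last (n + 1)) = 0
      · rw [if_pos hl]
        set τ := σ * (finRotate (n + 2))⁻¹ with hτ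
        have hτ0 : τ 0 = 0 := by
          have : (finRotate (n + 2))⁻¹ 0 = Fin.last (n + 1) := by
            rw [Equiv.Perm.inv_eq_iff_eq]
            simp [Fin.last_add_one]
          simp [hτ, Equiv.Perm.mul_apply, this, hl]
        have := piPerm_rot τ hτ0
        have hback : τ * finRotate (n + 2) = σ := by
          rw [hτ, mul_assoc, inv_mul_cancel, mul_one]
        rw [hback] at this
        rw [this]; ring
      · rw [if_neg hl]
        have hz : piPerm σ = 0 := by
          unfold piPerm
          rw [word_succ σ, List.finRange_succ]
          simp only [List.map_cons, List.map_map]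
          apply piW_eq_zero
          · intro hc
            exact h0 (Fin.ext (by simpa using hc))
          · rw [show (↑(σ 0) : ℕ) :: ↑(σ (Fin.succ 0)) ::
                List.map ((fun j => (↑(σ j.succ) : ℕ)) ∘ Fin.succ) (List.finRange n)
                = (List.finRange (n+2)).map (fun j => (σ j : ℕ)) by
              rw [word_succ σ, List.finRange_succ]; simp [List.map_map]]
            rw [word_last σ, List.getLast?_concat]
            intro hc
            exact hl (Fin.ext (by simpa using hc))
        rw [hz]; ring
  · -- f a ≠ 0 → g a ≠ a
    intro σ hσ
    by_cases h0 : σ 0 = 0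
    · simp only [if_pos h0]
      intro hc
      have := congrArg (fun τ : Equiv.Perm (Fin (n+2)) => τ 0) hc
      simp only [Equiv.Perm.mul_apply, finRotate_succ_apply, zero_add] at this
      have := σ.injective this
      simp [Fin.ext_iff] at this
    · rw [if_neg h0]
      by_cases hl : σ (Fin.last (n + 1)) = 0
      · rw [if_pos hl]
        intro hc
        have := congrArg (fun τ : Equiv.Perm (Fin (n+2)) => τ 0) hc
        simp only [Equiv.Perm.mul_apply] at this
        have hinv : (finRotate (n + 2))⁻¹ 0 = Fin.last (n + 1) := by
          rw [Equiv.Perm.inv_eq_iff_eq]; simp [Fin.last_add_one]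
        rw [hinv] at this
        have := σ.injective this
        exact absurd this (by simp [Fin.ext_iff])
      · exfalso
        apply hσ
        unfold piPerm
        rw [word_succ σ, List.finRange_succ]
        simp only [List.map_cons, List.map_map]
        apply piW_eq_zero
        · intro hc
          exact h0 (Fin.ext (by simpa using hc))
        · rw [show (↑(σ 0) : ℕ) :: ↑(σ (Fin.succ 0)) ::
              List.map ((fun j => (↑(σ j.succ) : ℕ)) ∘ Fin.succ) (List.finRange n)
              = (List.finRange (n+2)).map (fun j => (σ j : ℕ)) by
            rw [word_succ σ, List.finRange_succ]; simp [List.map_map]]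
          rw [word_last σ, List.getLast?_concat]
          intro hc
          exact hl (Fin.ext (by simpa using hc))
  · intro σ; exact Finset.mem_univ _
  · -- involution
    intro σ
    by_cases h0 : σ 0 = 0
    · simp only [if_pos h0]
      have hA : (σ * finRotate (n + 2)) 0 ≠ 0 := by
        simp only [Equiv.Perm.mul_apply, finRotate_succ_apply, zero_add]
        intro hc
        have := σ.injective (hc.trans h0.symm)
        simp [Fin.ext_iff] at this
      have hB : (σ * finRotate (n + 2)) (Fin.last (n + 1)) = 0 := by
        simp [Equiv.Perm.mul_apply, Fin.last_add_one, h0]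
      rw [if_neg hA, if_pos hB, mul_assoc, mul_inv_cancel, mul_one]
    · rw [if_neg h0]
      by_cases hl : σ (Fin.last (n + 1)) = 0
      · rw [if_pos hl]
        have hinv : (finRotate (n + 2))⁻¹ 0 = Fin.last (n + 1) := by
          rw [Equiv.Perm.inv_eq_iff_eq]; simp [Fin.last_add_one]
        have hA : (σ * (finRotate (n + 2))⁻¹) 0 = 0 := by
          simp [Equiv.Perm.mul_apply, hinv, hl]
        rw [if_pos hA, mul_assoc, inv_mul_cancel, mul_one]
      · rw [if_neg hl, if_neg h0, if_neg hl]

/-- the cancellation identity `F_{ℓ,1}`: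
`Σ_{σ ∈ S_ℓ} π_ℓ(σ) Σ_{i=1}^ℓ X_{σ_i(v)^b w} = 0` for `ℓ ≥ 2`, `b ≥ 1` and any
(possibly empty) word `w`. -/
theorem cancellation_F_ell_one {L : Type*} [LieRing L] {m ℓ q : ℕ}
    (hℓ : 2 ≤ ℓ) (b : ℕ) (hb : 1 ≤ b)
    (X : Fin m → L) (v : Fin ℓ → Fin m) (w : Fin q → Fin m) :
    ∑ σ : Equiv.Perm (Fin ℓ), piPerm σ •
      ∑ i : Fin ℓ,
        nestedBracket
          (List.replicate b (X (v (σ i))) ++ (List.finRange q).map fun j => X (w j)) = 0 := by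
  obtain ⟨n, rfl⟩ : ∃ n, ℓ = n + 2 := ⟨ℓ - 2, by omega⟩
  set F : Fin (n + 2) → L := fun k =>
    nestedBracket (List.replicate b (X (v k)) ++ (List.finRange q).map fun j => X (w j)) with hF
  calc ∑ σ : Equiv.Perm (Fin (n + 2)), piPerm σ • ∑ i, F (σ i)
      = ∑ σ : Equiv.Perm (Fin (n + 2)), piPerm σ • ∑ i, F i := by
        refine Finset.sum_congr rfl fun σ _ => ?_
        rw [Equiv.sum_comp σ F]
    _ = (∑ σ : Equiv.Perm (Fin (n + 2)), piPerm σ) • ∑ i, F i := by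
        rw [Finset.sum_smul]
    _ = 0 := by rw [sum_piPerm_eq_zero, zero_smul]
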